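/- Let Φ be a finite root system in a real inner product space V and n ≥ 1. The n-level Weyl group W_n(Φ), generated by the reflections s_{a,k} for a ∈ Φ and k ∈ ℤⁿ (embedded in the ordered field ⁿ*ℝ via magnitude-independent generators ω_1,…,ω_n), is isomorphic to the semidirect product W(Φ) ⋉ ℤⁿ(Φ^∨), where ℤⁿ(Φ^∨) is the group of translations by ℤⁿ-linear combinations of coroots. -/

import Mathlib

noncomputable section

variable {R : Type*} [Field R] [LinearOrder R] [IsStrictOrderedRing R]
variable {V : Type*} [AddCommGroup V] [Module R V]

/-- The hyper-affine reflection `s_{a,k} : v ↦ v − (2(B a v − k)/(B a a)) • a`,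
as a permutation of `V` (it is an involution). -/
def hyperAffineRefl (B : V →ₗ[R] V →ₗ[R] R) (a : V) (k : R) : Equiv.Perm V where
  toFun v := v - (2 * (B a v - k) / B a a) • a
  invFun v := v - (2 * (B a v - k) / B a a) • a
  left_inv := fun v => by
    by_cases h : B a a = 0
    · simp [h]
    · simp only [map_sub, map_smul, smul_eq_mul]
      rw [show 2 * (B a v - 2 * (B a v - k) / B a a * B a a - k) / B a a
          = -(2 * (B a v - k) / B a a) by field_simp; ring]
      rw [neg_smul, sub_neg_eq_add, sub_add_cancel]
  right_inv := fun v => by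
    by_cases h : B a a = 0
    · simp [h]
    · simp only [map_sub, map_smul, smul_eq_mul]
      rw [show 2 * (B a v - 2 * (B a v - k) / B a a * B a a - k) / B a a
          = -(2 * (B a v - k) / B a a) by field_simp; ring]
      rw [neg_smul, sub_neg_eq_add, sub_add_cancel]

/-- The `n`-level Weyl group `W_n(Φ)`: the subgroup of `Perm V` generated by the
reflections `s_{a,k}` for `a ∈ Φ` and `k` in the value group `Λ` (modeling `ℤⁿ ⊂ ⁿ*ℝ`). -/
def nLevelWeylGroup (B : V →ₗ[R] V →ₗ[R] R) (Φ : Finset V) (Λ : AddSubgroup R) :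
    Subgroup (Equiv.Perm V) :=
  Subgroup.closure {g | ∃ a ∈ Φ, ∃ k ∈ Λ, g = hyperAffineRefl B a k}

/-- The finite Weyl group `W(Φ)`, generated by the linear reflections `s_{a,0}`. -/
def finiteWeylGroup (B : V →ₗ[R] V →ₗ[R] R) (Φ : Finset V) : Subgroup (Equiv.Perm V) :=
  Subgroup.closure {g | ∃ a ∈ Φ, g = hyperAffineRefl B a 0}

/-- The coroot lattice `Λ(Φ^∨)`: the additive subgroup of `V` generated by the
`Λ`-multiples of the coroots `2a/(a,a)`. -/
def corootLattice (B : V →ₗ[R] V →ₗ[R] R) (Φ : Finset V) (Λ : AddSubgroup R) :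
    AddSubgroup V :=
  AddSubgroup.closure {x | ∃ a ∈ Φ, ∃ k ∈ Λ, x = (2 * k / B a a) • a}

/-- The translation subgroup of `Perm V` by vectors of the coroot lattice. -/
def translationSubgroup (B : V →ₗ[R] V →ₗ[R] R) (Φ : Finset V) (Λ : AddSubgroup R) :
    Subgroup (Equiv.Perm V) where
  carrier := {g | ∃ t ∈ corootLattice B Φ Λ, ∀ v : V, g v = v + t}
  one_mem' := ⟨0, (corootLattice B Φ Λ).zero_mem, by intro v; simp⟩
  mul_mem' := by
    rintro g h ⟨t, ht, hg⟩ ⟨s, hs, hh⟩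
    exact ⟨s + t, add_mem hs ht, fun v => by
      rw [Equiv.Perm.mul_apply, hh, hg, add_assoc]⟩
  inv_mem' := by
    rintro g ⟨t, ht, hg⟩
    refine ⟨-t, neg_mem ht, fun v => ?_⟩
    have h1 : g (v + -t) = v := by rw [hg]; abel
    nth_rewrite 1 [← h1]
    exact g.symm_apply_apply _

lemma hyperAffineRefl_apply (B : V →ₗ[R] V →ₗ[R] R) (a : V) (k : R) (v : V) :
    hyperAffineRefl B a k v = v - (2 * (B a v - k) / B a a) • a := rfl

lemma hyperAffineRefl_inv (B : V →ₗ[R] V →ₗ[R] R) (a : V) (k : R) :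
    (hyperAffineRefl B a k)⁻¹ = hyperAffineRefl B a k := rfl

lemma hyperAffineRefl_factor (B : V →ₗ[R] V →ₗ[R] R) (a : V) (k : R) :
    hyperAffineRefl B a k = Equiv.addRight ((2 * k / B a a) • a) * hyperAffineRefl B a 0 := by
  ext v
  simp only [Equiv.Perm.mul_apply, hyperAffineRefl_apply, Equiv.coe_addRight]
  rw [show 2 * (B a v - k) = 2 * (B a v - 0) - 2 * k by ring, sub_div, sub_smul]
  abel

lemma hyperAffineRefl_add (B : V →ₗ[R] V →ₗ[R] R) (a : V) (x y : V) :
    hyperAffineRefl B a 0 (x + y) = hyperAffineRefl B a 0 x + hyperAffineRefl B a 0 y := by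
  simp only [hyperAffineRefl_apply, map_add, sub_zero]
  rw [show 2 * (B a x + B a y) = 2 * B a x + 2 * B a y by ring, add_div, add_smul]
  abel

lemma hyperAffineRefl_zero (B : V →ₗ[R] V →ₗ[R] R) (a : V) :
    hyperAffineRefl B a 0 (0 : V) = 0 := by
  simp [hyperAffineRefl_apply]

section props
variable (B : V →ₗ[R] V →ₗ[R] R) (Φ : Finset V) (Λ : AddSubgroup R)
variable (hsymm : ∀ u v : V, B u v = B v u)
variable (hpos : ∀ v : V, v ≠ 0 → 0 < B v v)
variable (h0 : ∀ a ∈ Φ, a ≠ 0)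
variable (hcrys : ∀ a ∈ Φ, ∀ b ∈ Φ, ∃ m : ℤ, 2 * B a b = (m : R) * B a a)

include hsymm hpos h0 hcrys in
/-- A single linear reflection maps the coroot lattice into itself. -/
lemma refl_maps_lattice {a : V} (ha : a ∈ Φ) :
    ∀ t ∈ corootLattice B Φ Λ, hyperAffineRefl B a 0 t ∈ corootLattice B Φ Λ := by
  intro t ht
  induction ht using AddSubgroup.closure_induction with
  | mem x hx =>
    obtain ⟨b, hb, k, hk, rfl⟩ := hx
    have hBbb : B b b ≠ 0 := ne_of_gt (hpos b (h0 b hb))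
    obtain ⟨m, hm⟩ := hcrys b hb a ha
    have key : B a ((2 * k / B b b) • b) = (m : R) * k := by
      have h2 : (2 : R) ≠ 0 := two_ne_zero
      apply mul_left_cancel₀ h2
      simp only [map_smul, smul_eq_mul]
      rw [hsymm a b]
      field_simp
      linear_combination k * hm
    rw [hyperAffineRefl_apply, key]
    refine sub_mem (AddSubgroup.subset_closure ⟨b, hb, k, hk, rfl⟩) ?_
    have : (2 * ((m : R) * k - 0) / B a a) • a = (2 * ((m • k : R)) / B a a) • a := by
      norm_num [zsmul_eq_mul]
    rw [this]
    exact AddSubgroup.subset_closure ⟨a, ha, m • k, Λ.zsmul_mem hk m, rfl⟩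
  | zero => rw [hyperAffineRefl_zero]; exact zero_mem _
  | add x y hx hy ihx ihy => rw [hyperAffineRefl_add]; exact add_mem ihx ihy
  | neg x hx ihx =>
    have : hyperAffineRefl B a 0 (-x) = -(hyperAffineRefl B a 0 x) := by
      have := hyperAffineRefl_add B a x (-x)
      rw [add_neg_cancel, hyperAffineRefl_zero] at this
      exact eq_neg_of_add_eq_zero_right this.symm
    rw [this]; exact neg_mem ihx

end props

section sec2

variable (B : V →ₗ[R] V →ₗ[R] R) (Φ : Finset V) (Λ : AddSubgroup R)
variable (hsymm : ∀ u v : V, B u v = B v u)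
variable (hpos : ∀ v : V, v ≠ 0 → 0 < B v v)
variable (h0 : ∀ a ∈ Φ, a ≠ 0)
variable (hcrys : ∀ a ∈ Φ, ∀ b ∈ Φ, ∃ m : ℤ, 2 * B a b = (m : R) * B a a)

include hsymm hpos h0 hcrys in
lemma finiteWeyl_props :
    ∀ w ∈ finiteWeylGroup B Φ,
      (∀ x y : V, w (x + y) = w x + w y) ∧ w 0 = 0 ∧
      (∀ t ∈ corootLattice B Φ Λ, w t ∈ corootLattice B Φ Λ) ∧
      (∀ t ∈ corootLattice B Φ Λ, w⁻¹ t ∈ corootLattice B Φ Λ) := by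
  intro w hw
  induction hw using Subgroup.closure_induction with
  | mem g hg =>
    obtain ⟨a, ha, rfl⟩ := hg
    refine ⟨hyperAffineRefl_add B a, hyperAffineRefl_zero B a,
      refl_maps_lattice B Φ Λ hsymm hpos h0 hcrys ha, ?_⟩
    rw [hyperAffineRefl_inv]
    exact refl_maps_lattice B Φ Λ hsymm hpos h0 hcrys ha
  | one => exact ⟨by simp, by simp, fun t ht => by simpa, fun t ht => by simpa⟩
  | mul g h hg hh ihg ihh =>
    obtain ⟨ag, zg, lg, ig⟩ := ihg
    obtain ⟨ah, zh, lh, ih⟩ := ihh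
    refine ⟨fun x y => by
        rw [Equiv.Perm.mul_apply, Equiv.Perm.mul_apply, Equiv.Perm.mul_apply, ah, ag],
      by rw [Equiv.Perm.mul_apply, zh, zg],
      fun t ht => by rw [Equiv.Perm.mul_apply]; exact lg _ (lh _ ht),
      fun t ht => by rw [mul_inv_rev, Equiv.Perm.mul_apply]; exact ih _ (ig _ ht)⟩
  | inv g hg ihg =>
    obtain ⟨ag, zg, lg, ig⟩ := ihg
    refine ⟨fun x y => ?_, ?_, fun t ht => ig t ht,
      fun t ht => by rw [inv_inv]; exact lg t ht⟩
    · have h1 : g (g⁻¹ x + g⁻¹ y) = x + y := by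
        rw [ag, ← Equiv.Perm.mul_apply, ← Equiv.Perm.mul_apply, mul_inv_cancel, Equiv.Perm.one_apply, Equiv.Perm.one_apply]
      calc g⁻¹ (x + y) = g⁻¹ (g (g⁻¹ x + g⁻¹ y)) := by rw [h1]
        _ = g⁻¹ x + g⁻¹ y := Equiv.symm_apply_apply _ _
    · have h1 : g⁻¹ (0 : V) = g⁻¹ (g 0) := by rw [zg]
      rw [h1, ← Equiv.Perm.mul_apply, inv_mul_cancel, Equiv.Perm.one_apply]

lemma addRight_mem_nLevel : ∀ t ∈ corootLattice B Φ Λ,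
    (Equiv.addRight t : Equiv.Perm V) ∈ nLevelWeylGroup B Φ Λ := by
  intro t ht
  induction ht using AddSubgroup.closure_induction with
  | mem x hx =>
    obtain ⟨a, ha, k, hk, rfl⟩ := hx
    have h1 : (Equiv.addRight ((2 * k / B a a) • a) : Equiv.Perm V)
        = hyperAffineRefl B a k * (hyperAffineRefl B a 0)⁻¹ := by
      have hs : hyperAffineRefl B a 0 * hyperAffineRefl B a 0 = 1 := by
        nth_rewrite 2 [← hyperAffineRefl_inv B a 0]
        exact mul_inv_cancel _
      rw [hyperAffineRefl_inv, hyperAffineRefl_factor B a k, mul_assoc, hs, mul_one]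
    rw [h1]
    exact mul_mem (Subgroup.subset_closure ⟨a, ha, k, hk, rfl⟩)
      (inv_mem (Subgroup.subset_closure ⟨a, ha, 0, zero_mem _, rfl⟩))
  | zero =>
    have h1 : (Equiv.addRight (0 : V) : Equiv.Perm V) = 1 := Equiv.ext fun v => by simp
    rw [h1]; exact one_mem _
  | add x y hx hy ihx ihy =>
    have h1 : (Equiv.addRight (x + y) : Equiv.Perm V)
        = Equiv.addRight x * Equiv.addRight y := Equiv.ext fun v => by
      simp [Equiv.Perm.mul_apply]; abel
    rw [h1]; exact mul_mem ihx ihy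
  | neg x hx ihx =>
    have h1 : (Equiv.addRight (-x) : Equiv.Perm V) = (Equiv.addRight x)⁻¹ := by
      refine eq_inv_of_mul_eq_one_left (Equiv.ext fun v => ?_)
      simp [Equiv.Perm.mul_apply]
    rw [h1]; exact inv_mem ihx

include hsymm hpos h0 hcrys in
lemma weyl_conj : ∀ w ∈ finiteWeylGroup B Φ, ∀ h ∈ translationSubgroup B Φ Λ,
    w * h * w⁻¹ ∈ translationSubgroup B Φ Λ := by
  intro w hw h hh
  obtain ⟨t, ht, hhv⟩ := hh
  obtain ⟨aw, zw, lw, iw⟩ := finiteWeyl_props B Φ Λ hsymm hpos h0 hcrys w hw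
  refine ⟨w t, lw t ht, fun v => ?_⟩
  rw [Equiv.Perm.mul_apply, Equiv.Perm.mul_apply, hhv, aw, ← Equiv.Perm.mul_apply, mul_inv_cancel, Equiv.Perm.one_apply]

include hsymm hpos h0 hcrys in
lemma nLevel_factor : ∀ g ∈ nLevelWeylGroup B Φ Λ,
    ∃ t ∈ translationSubgroup B Φ Λ, ∃ w ∈ finiteWeylGroup B Φ, g = t * w := by
  intro g hg
  induction hg using Subgroup.closure_induction with
  | mem g hgm =>
    obtain ⟨a, ha, k, hk, rfl⟩ := hgm
    exact ⟨Equiv.addRight ((2 * k / B a a) • a),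
      ⟨_, AddSubgroup.subset_closure ⟨a, ha, k, hk, rfl⟩, fun v => rfl⟩,
      hyperAffineRefl B a 0, Subgroup.subset_closure ⟨a, ha, rfl⟩,
      hyperAffineRefl_factor B a k⟩
  | one => exact ⟨1, one_mem _, 1, one_mem _, (one_mul 1).symm⟩
  | mul g h hg hh ihg ihh =>
    obtain ⟨t1, ht1, w1, hw1, rfl⟩ := ihg
    obtain ⟨t2, ht2, w2, hw2, rfl⟩ := ihh
    exact ⟨t1 * (w1 * t2 * w1⁻¹),
      mul_mem ht1 (weyl_conj B Φ Λ hsymm hpos h0 hcrys w1 hw1 t2 ht2),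
      w1 * w2, mul_mem hw1 hw2, by group⟩
  | inv g hg ihg =>
    obtain ⟨t, ht, w, hw, rfl⟩ := ihg
    exact ⟨w⁻¹ * t⁻¹ * (w⁻¹)⁻¹,
      weyl_conj B Φ Λ hsymm hpos h0 hcrys w⁻¹ (inv_mem hw) t⁻¹ (inv_mem ht),
      w⁻¹, inv_mem hw, by group⟩

end sec2

/-- Let `Φ` be a finite root system in an inner product space over the
linearly ordered field `R` (modeling `ⁿ*ℝ`, with value group `Λ ≅ ℤⁿ` embedded via the
magnitude-independent `ω_1, …, ω_n`).  Then the `n`-level Weyl group `W_n(Φ)` decomposes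
as the (internal) semidirect product `W(Φ) ⋉ Λ(Φ^∨)`: the translation subgroup
`T = Λ(Φ^∨)` is contained in `W_n(Φ)` and normalized by it, `W(Φ) ∩ T = 1`,
`W(Φ) ⊔ T = W_n(Φ)`, and every element of `W_n(Φ)` factors as a translation times an
element of `W(Φ)`. -/
theorem nLevelWeylGroup_eq_semidirect
    (B : V →ₗ[R] V →ₗ[R] R)
    (hsymm : ∀ u v : V, B u v = B v u)
    (hpos : ∀ v : V, v ≠ 0 → 0 < B v v)
    (Φ : Finset V) (Λ : AddSubgroup R)
    (h0 : ∀ a ∈ Φ, a ≠ 0)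
    -- `Φ` is closed under its reflections
    (hrefl : ∀ a ∈ Φ, ∀ b ∈ Φ, hyperAffineRefl B a (0 : R) b ∈ Φ)
    -- crystallographic condition: `2(a,b)/(a,a)` is an integer
    (hcrys : ∀ a ∈ Φ, ∀ b ∈ Φ, ∃ m : ℤ, 2 * B a b = (m : R) * B a a) :
    translationSubgroup B Φ Λ ≤ nLevelWeylGroup B Φ Λ ∧
    finiteWeylGroup B Φ ≤ nLevelWeylGroup B Φ Λ ∧
    (∀ g ∈ nLevelWeylGroup B Φ Λ, ∀ h ∈ translationSubgroup B Φ Λ,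
      g * h * g⁻¹ ∈ translationSubgroup B Φ Λ) ∧
    finiteWeylGroup B Φ ⊓ translationSubgroup B Φ Λ = ⊥ ∧
    finiteWeylGroup B Φ ⊔ translationSubgroup B Φ Λ = nLevelWeylGroup B Φ Λ ∧
    (∀ g ∈ nLevelWeylGroup B Φ Λ,
      ∃ t ∈ translationSubgroup B Φ Λ, ∃ w ∈ finiteWeylGroup B Φ, g = t * w) := by
  have hT : translationSubgroup B Φ Λ ≤ nLevelWeylGroup B Φ Λ := by
    rintro g ⟨t, ht, hg⟩
    have h1 : g = Equiv.addRight t := Equiv.ext fun v => hg v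
    rw [h1]
    exact addRight_mem_nLevel B Φ Λ t ht
  have hW : finiteWeylGroup B Φ ≤ nLevelWeylGroup B Φ Λ := by
    rw [finiteWeylGroup, nLevelWeylGroup]
    refine Subgroup.closure_le _ |>.mpr ?_
    rintro g ⟨a, ha, rfl⟩
    exact Subgroup.subset_closure ⟨a, ha, 0, zero_mem _, rfl⟩
  have hfac := nLevel_factor B Φ Λ hsymm hpos h0 hcrys
  refine ⟨hT, hW, ?_, ?_, ?_, hfac⟩
  · intro g hg h hh
    obtain ⟨t, ht, w, hw, rfl⟩ := hfac g hg
    have h1 : t * w * h * (t * w)⁻¹ = t * (w * h * w⁻¹) * t⁻¹ := by group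
    rw [h1]
    exact mul_mem (mul_mem ht (weyl_conj B Φ Λ hsymm hpos h0 hcrys w hw h hh)) (inv_mem ht)
  · rw [eq_bot_iff]
    rintro g ⟨hgW, t, ht, hg⟩
    obtain ⟨aw, zw, lw, iw⟩ := finiteWeyl_props B Φ Λ hsymm hpos h0 hcrys g hgW
    have h1 : t = 0 := by have := hg 0; rw [zw, zero_add] at this; exact this.symm
    have h2 : g = 1 := Equiv.ext fun v => by rw [hg v, h1, add_zero]; rfl
    simp [h2, Subgroup.mem_bot]
  · refine le_antisymm (sup_le hW hT) ?_
    rw [nLevelWeylGroup]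
    refine Subgroup.closure_le _ |>.mpr ?_
    rintro g ⟨a, ha, k, hk, rfl⟩
    rw [hyperAffineRefl_factor B a k]
    refine mul_mem (le_sup_right (α := Subgroup (Equiv.Perm V)) ?_)
      (le_sup_left (α := Subgroup (Equiv.Perm V)) ?_)
    · exact ⟨_, AddSubgroup.subset_closure ⟨a, ha, k, hk, rfl⟩, fun v => rfl⟩
    · exact Subgroup.subset_closure ⟨a, ha, rfl⟩

end
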